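/- There exists a constant C > 0 (depending only on H, C_H, α) such that for all a ∈ ℝ and every integer n ≥ 2, ∑_{k=2}^{n} [(t_k^{H(t_k)} − t_{k-1}^{H(t_{k-1})})² / t_{k-1}^{H(t_{k-1})}] · φ(a / t_{k-1}^{H(t_{k-1})}) ≤ C φ(a) n^{−min(H_min, 2α−1)}. -/

import Mathlib

open Finset

noncomputable def phi (a : ℝ) : ℝ := (Real.sqrt (2 * Real.pi))⁻¹ * Real.exp (-a ^ 2 / 2)

lemma exp_sub_exp_le' {x y : ℝ} (h : y ≤ x) : Real.exp x - Real.exp y ≤ (x - y) * Real.exp x := by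
  have h1 : (1 + (y - x)) * Real.exp x ≤ Real.exp (y - x) * Real.exp x :=
    mul_le_mul_of_nonneg_right (by linarith [Real.add_one_le_exp (y - x)]) (Real.exp_nonneg x)
  rw [← Real.exp_add] at h1
  have : y - x + x = y := by ring
  rw [this] at h1
  nlinarith [Real.exp_nonneg x]

lemma neg_log_le {x ε : ℝ} (hx : 0 < x) (hε : 0 < ε) : -Real.log x ≤ x ^ (-ε) / ε := by
  have h := Real.log_le_sub_one_of_pos (Real.rpow_pos_of_pos hx (-ε))
  rw [Real.log_rpow hx] at h
  rw [le_div_iff₀ hε]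
  nlinarith [Real.rpow_pos_of_pos hx (-ε)]

lemma rpow_sub_rpow_le {t s h : ℝ} (ht : 0 < t) (hts : t < s) (hh0 : 0 < h) (hh1 : h ≤ 1) :
    s ^ h - t ^ h ≤ t ^ (h - 1) * (s - t) := by
  obtain ⟨c, hc, hceq⟩ := exists_hasDerivAt_eq_slope (fun x => x ^ h) (fun x => h * x ^ (h - 1))
    hts (by
      apply ContinuousOn.rpow_const continuousOn_id
      intro x hx; left; exact (ht.trans_le hx.1).ne')
    (fun x hx => Real.hasDerivAt_rpow_const (Or.inl (ht.trans hx.1).ne'))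
  have hc1 : 0 < c := ht.trans hc.1
  have heq : (s ^ h - t ^ h) / (s - t) = h * c ^ (h - 1) := hceq.symm
  have hst : 0 < s - t := by linarith
  rw [div_eq_iff hst.ne'] at heq
  rw [heq]
  have h1 : c ^ (h - 1) ≤ t ^ (h - 1) :=
    Real.rpow_le_rpow_of_nonpos ht hc.1.le (by linarith)
  have h2 : h * c ^ (h - 1) ≤ t ^ (h - 1) := by
    nlinarith [Real.rpow_pos_of_pos hc1 (h-1)]
  exact mul_le_mul_of_nonneg_right h2 hst.le

lemma exp_abs_sub {p q r : ℝ} (hp : p ≤ r) (hq : q ≤ r) :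
    |Real.exp p - Real.exp q| ≤ |p - q| * Real.exp r := by
  rcases le_total p q with h | h
  · rw [abs_sub_comm, abs_of_nonneg (by simp [Real.exp_le_exp, h]), abs_sub_comm, abs_of_nonneg (by linarith)]
    calc Real.exp q - Real.exp p ≤ (q - p) * Real.exp q := exp_sub_exp_le' h
      _ ≤ (q - p) * Real.exp r := by
          apply mul_le_mul_of_nonneg_left (Real.exp_le_exp.2 hq) (by linarith)
  · rw [abs_of_nonneg (by simp [Real.exp_le_exp, h]), abs_of_nonneg (by linarith)]
    calc Real.exp p - Real.exp q ≤ (p - q) * Real.exp p := exp_sub_exp_le' h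
      _ ≤ (p - q) * Real.exp r := by
          apply mul_le_mul_of_nonneg_left (Real.exp_le_exp.2 hp) (by linarith)

set_option maxHeartbeats 1000000 in
lemma term_bound {Hmin t s u v D : ℝ} (hHmin : 1/2 < Hmin) (ht : 0 < t) (hts : t < s)
    (hs1 : s ≤ 1) (hst2 : s ≤ 2*t) (hu : Hmin ≤ u) (hv : Hmin ≤ v) (hv1 : v ≤ 1)
    (hD : |u - v| ≤ D) :
    (s ^ u - t ^ v) ^ 2 / t ^ v
      ≤ 4 * (D / (Hmin - 1/2)) ^ 2 + 2 * ((s - t) ^ 2 * t ^ (Hmin - 2)) := by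
  set ε : ℝ := Hmin - 1/2 with hε
  have hεpos : 0 < ε := by rw [hε]; linarith
  have hs0 : 0 < s := ht.trans hts
  have ht1 : t ≤ 1 := by linarith
  have hD0 : 0 ≤ D := (abs_nonneg _).trans hD
  have hL : Real.log s ≤ 0 := Real.log_nonpos hs0.le hs1
  -- A bound
  have hA : |s ^ u - s ^ v| ≤ (D / ε) * s ^ (1/2 : ℝ) := by
    rw [Real.rpow_def_of_pos hs0 u, Real.rpow_def_of_pos hs0 v]
    have h1 : Real.log s * u ≤ Real.log s * Hmin :=
      mul_le_mul_of_nonpos_left hu hL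
    have h2 : Real.log s * v ≤ Real.log s * Hmin :=
      mul_le_mul_of_nonpos_left hv hL
    calc |Real.exp (Real.log s * u) - Real.exp (Real.log s * v)|
        ≤ |Real.log s * u - Real.log s * v| * Real.exp (Real.log s * Hmin) :=
          exp_abs_sub h1 h2
      _ = |u - v| * (-Real.log s) * s ^ Hmin := by
          rw [← Real.rpow_def_of_pos hs0]
          rw [← mul_sub, abs_mul, abs_of_nonpos hL]
          ring
      _ ≤ D * (s ^ (-ε) / ε) * s ^ Hmin := by
          apply mul_le_mul_of_nonneg_right _ (Real.rpow_nonneg hs0.le _)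
          apply mul_le_mul hD (neg_log_le hs0 hεpos) (by linarith) hD0
      _ = (D / ε) * (s ^ (-ε) * s ^ Hmin) := by ring
      _ = (D / ε) * s ^ (1/2 : ℝ) := by
          rw [← Real.rpow_add hs0]
          norm_num [hε]
  have hA2 : (s ^ u - s ^ v) ^ 2 ≤ (D / ε) ^ 2 * s := by
    have h1 : (s ^ u - s ^ v) ^ 2 ≤ ((D / ε) * s ^ (1/2 : ℝ)) ^ 2 := by
      rw [← sq_abs (s ^ u - s ^ v)]
      exact pow_le_pow_left₀ (abs_nonneg _) hA 2
    calc (s ^ u - s ^ v) ^ 2 ≤ ((D / ε) * s ^ (1/2 : ℝ)) ^ 2 := h1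
      _ = (D / ε) ^ 2 * (s ^ (1/2 : ℝ) * s ^ (1/2 : ℝ)) := by ring
      _ = (D / ε) ^ 2 * s := by
          rw [← Real.rpow_add hs0]; norm_num
  -- B bound
  have hBnn : 0 ≤ s ^ v - t ^ v := by
    have := Real.rpow_le_rpow ht.le hts.le (by linarith : (0:ℝ) ≤ v)
    linarith
  have hB : s ^ v - t ^ v ≤ t ^ (v - 1) * (s - t) :=
    rpow_sub_rpow_le ht hts (by linarith) hv1
  have hB2 : (s ^ v - t ^ v) ^ 2 ≤ t ^ (v - 1) * t ^ (v - 1) * (s - t) ^ 2 := by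
    nlinarith [hB, hBnn]
  -- t ^ v positivity and lower bound
  have htv : 0 < t ^ v := Real.rpow_pos_of_pos ht v
  have htv1 : t ≤ t ^ v := by
    have := Real.rpow_le_rpow_of_exponent_ge ht ht1 hv1
    rwa [Real.rpow_one] at this
  -- A part divided
  have hApart : (s ^ u - s ^ v) ^ 2 / t ^ v ≤ 2 * (D / ε) ^ 2 := by
    rw [div_le_iff₀ htv]
    calc (s ^ u - s ^ v) ^ 2 ≤ (D / ε) ^ 2 * s := hA2
      _ ≤ (D / ε) ^ 2 * (2 * t) := by
          apply mul_le_mul_of_nonneg_left hst2 (sq_nonneg _)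
      _ ≤ 2 * (D / ε) ^ 2 * t ^ v := by
          nlinarith [sq_nonneg (D / ε), htv1, ht]
  -- B part divided
  have hBpart : (s ^ v - t ^ v) ^ 2 / t ^ v ≤ (s - t) ^ 2 * t ^ (Hmin - 2) := by
    rw [div_le_iff₀ htv]
    have key : t ^ (v - 1) * t ^ (v - 1) = t ^ (v - 2) * t ^ v := by
      rw [← Real.rpow_add ht, ← Real.rpow_add ht]; ring_nf
    have hmono : t ^ (v - 2) ≤ t ^ (Hmin - 2) :=
      Real.rpow_le_rpow_of_exponent_ge ht ht1 (by linarith)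
    calc (s ^ v - t ^ v) ^ 2 ≤ t ^ (v - 2) * t ^ v * (s - t) ^ 2 := by
          rw [← key]; exact hB2
      _ ≤ t ^ (Hmin - 2) * t ^ v * (s - t) ^ 2 := by
          apply mul_le_mul_of_nonneg_right _ (sq_nonneg _)
          exact mul_le_mul_of_nonneg_right hmono htv.le
      _ = (s - t) ^ 2 * t ^ (Hmin - 2) * t ^ v := by ring
  -- combine
  have hsplit : (s ^ u - t ^ v) ^ 2 ≤ 2 * (s ^ u - s ^ v) ^ 2 + 2 * (s ^ v - t ^ v) ^ 2 := by
    nlinarith [sq_nonneg (s ^ u - s ^ v - (s ^ v - t ^ v))]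
  calc (s ^ u - t ^ v) ^ 2 / t ^ v
      ≤ (2 * (s ^ u - s ^ v) ^ 2 + 2 * (s ^ v - t ^ v) ^ 2) / t ^ v := by
        gcongr
    _ = 2 * ((s ^ u - s ^ v) ^ 2 / t ^ v) + 2 * ((s ^ v - t ^ v) ^ 2 / t ^ v) := by ring
    _ ≤ 2 * (2 * (D / ε) ^ 2) + 2 * ((s - t) ^ 2 * t ^ (Hmin - 2)) := by
        have := hApart; have := hBpart
        nlinarith
    _ = 4 * (D / ε) ^ 2 + 2 * ((s - t) ^ 2 * t ^ (Hmin - 2)) := by ring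


lemma phi_pos (a : ℝ) : 0 < phi a := by
  unfold phi
  have : 0 < Real.sqrt (2 * Real.pi) := Real.sqrt_pos.2 (by positivity)
  positivity

lemma phi_le {a x : ℝ} (hx : 0 < x) (hx1 : x ≤ 1) : phi (a / x) ≤ phi a := by
  unfold phi
  apply mul_le_mul_of_nonneg_left _ (by positivity)
  apply Real.exp_le_exp.2
  have h : a ^ 2 ≤ (a / x) ^ 2 := by
    rw [div_pow, le_div_iff₀ (by positivity)]
    have hx2 : x ^ 2 ≤ 1 := by nlinarith
    nlinarith [sq_nonneg a]
  linarith

set_option maxHeartbeats 2000000 in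
/-- Lemma: `∑_{k=2}^{n} [(t_k^{H(t_k)} − t_{k-1}^{H(t_{k-1})})² / t_{k-1}^{H(t_{k-1})}]
· φ(a / t_{k-1}^{H(t_{k-1})}) ≤ C φ(a) n^{−min(Hmin, 2α−1)}` for all `a ∈ ℝ`, `n ≥ 2`. -/
theorem stmt_4 (H : ℝ → ℝ) (C_H α Hmin Hmax : ℝ)
    (hcont : ContinuousOn H (Set.Icc 0 1))
    (hrange : ∀ t ∈ Set.Icc (0:ℝ) 1, H t ∈ Set.Ioo (1/2 : ℝ) 1)
    (hmin : IsLeast (H '' Set.Icc (0:ℝ) 1) Hmin)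
    (hmax : IsGreatest (H '' Set.Icc (0:ℝ) 1) Hmax)
    (hC_H : 0 < C_H) (hα : α ∈ Set.Ioc (1/2 : ℝ) 1)
    (hHolder : ∀ t ∈ Set.Icc (0:ℝ) 1, ∀ s ∈ Set.Icc (0:ℝ) 1,
      |H t - H s| ≤ C_H * |t - s| ^ α) :
    ∃ C > 0, ∀ a : ℝ, ∀ n : ℕ, 2 ≤ n →
      ∑ k ∈ Finset.Icc 2 n,
        (((k : ℝ)/(n : ℝ)) ^ H ((k : ℝ)/(n : ℝ))
          - (((k : ℝ) - 1)/(n : ℝ)) ^ H (((k : ℝ) - 1)/(n : ℝ))) ^ 2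
          / ((((k : ℝ) - 1)/(n : ℝ)) ^ H (((k : ℝ) - 1)/(n : ℝ)))
          * phi (a / (((k : ℝ) - 1)/(n : ℝ)) ^ H (((k : ℝ) - 1)/(n : ℝ)))
      ≤ C * phi a * (n : ℝ) ^ (-(min Hmin (2 * α - 1))) := by
  obtain ⟨⟨t₀, ht₀, hHt₀⟩, hminLB⟩ := hmin
  have hHminIoo : Hmin ∈ Set.Ioo (1/2 : ℝ) 1 := hHt₀ ▸ hrange t₀ ht₀
  have hminLB' : ∀ t ∈ Set.Icc (0:ℝ) 1, Hmin ≤ H t := fun t ht => hminLB ⟨t, ht, rfl⟩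
  have hεpos : 0 < Hmin - 1/2 := by linarith [hHminIoo.1]
  set ε : ℝ := Hmin - 1/2 with hεdef
  set K : ℝ := 4 * (C_H / ε) ^ 2 with hKdef
  have hKpos : 0 < K := by positivity
  have hTsummable : Summable (fun j : ℕ => ((j:ℝ) + 1) ^ (Hmin - 2)) := by
    have h1 : Summable (fun j : ℕ => (j:ℝ) ^ (Hmin - 2)) :=
      Real.summable_nat_rpow.2 (by linarith [hHminIoo.2])
    have h2 := (summable_nat_add_iff 1).2 h1
    apply h2.congr
    intro j
    push_cast
    ring_nf
  set T : ℝ := ∑' j : ℕ, ((j:ℝ) + 1) ^ (Hmin - 2) with hTdef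
  have hT0 : 0 ≤ T := tsum_nonneg fun j => Real.rpow_nonneg (by positivity) _
  refine ⟨K + 2 * T, by linarith, fun a n hn => ?_⟩
  have hN0 : (0:ℝ) < (n:ℝ) := by exact_mod_cast Nat.pos_of_ne_zero (by omega)
  have hN1 : (1:ℝ) ≤ (n:ℝ) := by exact_mod_cast (by omega : 1 ≤ n)
  set N : ℝ := (n:ℝ) with hNdef
  set m : ℝ := min Hmin (2 * α - 1) with hmdef
  -- per-term bound
  have hterm : ∀ k ∈ Finset.Icc 2 n,
      (((k : ℝ)/N) ^ H ((k : ℝ)/N)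
          - (((k : ℝ) - 1)/N) ^ H (((k : ℝ) - 1)/N)) ^ 2
          / ((((k : ℝ) - 1)/N) ^ H (((k : ℝ) - 1)/N))
          * phi (a / (((k : ℝ) - 1)/N) ^ H (((k : ℝ) - 1)/N))
      ≤ K * N ^ (-(2 * α)) * phi a
        + 2 * N ^ (-Hmin) * phi a * ((k:ℝ) - 1) ^ (Hmin - 2) := by
    intro k hk
    rw [Finset.mem_Icc] at hk
    have hk2 : (2:ℝ) ≤ (k:ℝ) := by exact_mod_cast hk.1
    have hkN : (k:ℝ) ≤ N := by rw [hNdef]; exact_mod_cast hk.2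
    have ht : 0 < ((k:ℝ) - 1)/N := div_pos (by linarith) hN0
    have hts : ((k:ℝ) - 1)/N < (k:ℝ)/N := by
      rw [div_lt_div_iff₀ hN0 hN0]
      nlinarith
    have hs1 : (k:ℝ)/N ≤ 1 := by rw [div_le_one hN0]; exact hkN
    have hst2 : (k:ℝ)/N ≤ 2 * (((k:ℝ) - 1)/N) := by
      rw [show 2 * (((k:ℝ) - 1)/N) = (2 * ((k:ℝ) - 1))/N from by ring,
        div_le_div_iff₀ hN0 hN0]
      nlinarith
    have hsmem : (k:ℝ)/N ∈ Set.Icc (0:ℝ) 1 := ⟨by positivity, hs1⟩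
    have htmem : ((k:ℝ) - 1)/N ∈ Set.Icc (0:ℝ) 1 := ⟨ht.le, hts.le.trans hs1⟩
    have hu := hminLB' _ hsmem
    have hv := hminLB' _ htmem
    have hv1 : H (((k:ℝ) - 1)/N) ≤ 1 := (hrange _ htmem).2.le
    have hsub : (k:ℝ)/N - ((k:ℝ) - 1)/N = 1/N := by ring
    have hD : |H ((k:ℝ)/N) - H (((k:ℝ) - 1)/N)| ≤ C_H * (1/N) ^ α := by
      have h := hHolder _ hsmem _ htmem
      rwa [hsub, abs_of_pos (one_div_pos.2 hN0)] at h
    have key := term_bound hHminIoo.1 ht hts hs1 hst2 hu hv hv1 hD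
    have htv_pos : 0 < (((k:ℝ) - 1)/N) ^ H (((k:ℝ) - 1)/N) := Real.rpow_pos_of_pos ht _
    have htv_le1 : (((k:ℝ) - 1)/N) ^ H (((k:ℝ) - 1)/N) ≤ 1 :=
      Real.rpow_le_one ht.le htmem.2 (by linarith [hHminIoo.1])
    have hphi := phi_le (a := a) htv_pos htv_le1
    have hq0 : 0 ≤ (((k : ℝ)/N) ^ H ((k : ℝ)/N)
          - (((k : ℝ) - 1)/N) ^ H (((k : ℝ) - 1)/N)) ^ 2
          / ((((k : ℝ) - 1)/N) ^ H (((k : ℝ) - 1)/N)) :=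
      div_nonneg (sq_nonneg _) htv_pos.le
    have hbound0 : 0 ≤ 4 * ((C_H * (1/N) ^ α) / ε) ^ 2
        + 2 * (((k:ℝ)/N - ((k:ℝ) - 1)/N) ^ 2 * (((k:ℝ) - 1)/N) ^ (Hmin - 2)) := by
      have := Real.rpow_nonneg ht.le (Hmin - 2)
      positivity
    have hmul := mul_le_mul key hphi (phi_pos _).le hbound0
    -- algebraic rewrites
    have e1 : 4 * ((C_H * (1/N) ^ α) / ε) ^ 2 = K * N ^ (-(2 * α)) := by
      have h' : ((1/N : ℝ) ^ α) ^ 2 = N ^ (-(2 * α)) := by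
        rw [← Real.rpow_natCast ((1/N : ℝ) ^ α) 2, ← Real.rpow_mul (by positivity),
          one_div, Real.inv_rpow hN0.le, ← Real.rpow_neg hN0.le]
        norm_num [mul_comm]
      calc 4 * ((C_H * (1/N) ^ α) / ε) ^ 2 = 4 * (C_H / ε) ^ 2 * ((1/N : ℝ) ^ α) ^ 2 := by ring
        _ = K * N ^ (-(2 * α)) := by rw [h', hKdef]
    have e2 : ((k:ℝ)/N - ((k:ℝ) - 1)/N) ^ 2 * (((k:ℝ) - 1)/N) ^ (Hmin - 2)
        = ((k:ℝ) - 1) ^ (Hmin - 2) * N ^ (-Hmin) := by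
      rw [hsub, Real.div_rpow (by linarith) hN0.le, Real.rpow_neg hN0.le]
      have hsplit : N ^ (Hmin - 2) * N ^ (2:ℕ) = N ^ Hmin := by
        rw [← Real.rpow_natCast N 2, ← Real.rpow_add hN0]
        norm_num
      have h1 : N ≠ 0 := hN0.ne'
      have h2 : N ^ (Hmin - 2) ≠ 0 := (Real.rpow_pos_of_pos hN0 _).ne'
      have h3 : N ^ Hmin ≠ 0 := (Real.rpow_pos_of_pos hN0 _).ne'
      field_simp
      rw [← hsplit]
      ring
    calc (((k : ℝ)/N) ^ H ((k : ℝ)/N)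
          - (((k : ℝ) - 1)/N) ^ H (((k : ℝ) - 1)/N)) ^ 2
          / ((((k : ℝ) - 1)/N) ^ H (((k : ℝ) - 1)/N))
          * phi (a / (((k : ℝ) - 1)/N) ^ H (((k : ℝ) - 1)/N))
        ≤ (4 * ((C_H * (1/N) ^ α) / ε) ^ 2
          + 2 * (((k:ℝ)/N - ((k:ℝ) - 1)/N) ^ 2 * (((k:ℝ) - 1)/N) ^ (Hmin - 2))) * phi a := hmul
      _ = K * N ^ (-(2 * α)) * phi a
          + 2 * N ^ (-Hmin) * phi a * ((k:ℝ) - 1) ^ (Hmin - 2) := by rw [e1, e2]; ring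
  -- sum the bound
  have hsum := Finset.sum_le_sum hterm
  have hcard : ((Finset.Icc 2 n).card : ℝ) ≤ N := by
    rw [Nat.card_Icc, hNdef]
    exact_mod_cast (by omega : n + 1 - 2 ≤ n)
  have hS : ∑ k ∈ Finset.Icc 2 n, ((k:ℝ) - 1) ^ (Hmin - 2) ≤ T := by
    have hre : ∑ k ∈ Finset.Icc 2 n, ((k:ℝ) - 1) ^ (Hmin - 2)
        = ∑ j ∈ Finset.range (n + 1 - 2), (((2 + j : ℕ):ℝ) - 1) ^ (Hmin - 2) := by
      rw [← Finset.Ico_add_one_right_eq_Icc, Finset.sum_Ico_eq_sum_range]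
    rw [hre]
    calc ∑ j ∈ Finset.range (n + 1 - 2), (((2 + j : ℕ):ℝ) - 1) ^ (Hmin - 2)
        = ∑ j ∈ Finset.range (n + 1 - 2), ((j:ℝ) + 1) ^ (Hmin - 2) := by
          apply Finset.sum_congr rfl
          intro j _
          congr 1
          push_cast
          ring
      _ ≤ T := Summable.sum_le_tsum _ (fun j _ => Real.rpow_nonneg (by positivity) _) hTsummable
  have hsplit2 : ∑ k ∈ Finset.Icc 2 n,
      (K * N ^ (-(2 * α)) * phi a + 2 * N ^ (-Hmin) * phi a * ((k:ℝ) - 1) ^ (Hmin - 2))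
      = ((Finset.Icc 2 n).card : ℝ) * (K * N ^ (-(2 * α)) * phi a)
        + 2 * N ^ (-Hmin) * phi a * ∑ k ∈ Finset.Icc 2 n, ((k:ℝ) - 1) ^ (Hmin - 2) := by
    rw [Finset.sum_add_distrib, Finset.sum_const, Finset.mul_sum, nsmul_eq_mul]
  -- rpow comparisons
  have f1 : N * N ^ (-(2 * α)) ≤ N ^ (-m) := by
    have e : N * N ^ (-(2 * α)) = N ^ (1 - 2 * α) := by
      rw [show (1 - 2 * α) = 1 + -(2 * α) from by ring, Real.rpow_add hN0, Real.rpow_one]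
    rw [e]
    exact Real.rpow_le_rpow_of_exponent_le hN1 (by
      have := min_le_right Hmin (2 * α - 1); rw [hmdef]; linarith)
  have f2 : N ^ (-Hmin) ≤ N ^ (-m) :=
    Real.rpow_le_rpow_of_exponent_le hN1 (by
      have := min_le_left Hmin (2 * α - 1); rw [hmdef]; linarith)
  have hpa := (phi_pos a).le
  have hNm0 : 0 ≤ N ^ (-m) := Real.rpow_nonneg hN0.le _
  have hNa0 : 0 ≤ N ^ (-(2 * α)) := Real.rpow_nonneg hN0.le _
  have hNh0 : 0 ≤ N ^ (-Hmin) := Real.rpow_nonneg hN0.le _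
  calc ∑ k ∈ Finset.Icc 2 n,
        (((k : ℝ)/N) ^ H ((k : ℝ)/N)
          - (((k : ℝ) - 1)/N) ^ H (((k : ℝ) - 1)/N)) ^ 2
          / ((((k : ℝ) - 1)/N) ^ H (((k : ℝ) - 1)/N))
          * phi (a / (((k : ℝ) - 1)/N) ^ H (((k : ℝ) - 1)/N))
      ≤ ∑ k ∈ Finset.Icc 2 n,
        (K * N ^ (-(2 * α)) * phi a + 2 * N ^ (-Hmin) * phi a * ((k:ℝ) - 1) ^ (Hmin - 2)) := hsum
    _ = ((Finset.Icc 2 n).card : ℝ) * (K * N ^ (-(2 * α)) * phi a)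
        + 2 * N ^ (-Hmin) * phi a * ∑ k ∈ Finset.Icc 2 n, ((k:ℝ) - 1) ^ (Hmin - 2) := hsplit2
    _ ≤ N * (K * N ^ (-(2 * α)) * phi a) + 2 * N ^ (-Hmin) * phi a * T := by
        apply add_le_add
        · apply mul_le_mul_of_nonneg_right hcard (by positivity)
        · apply mul_le_mul_of_nonneg_left hS (by positivity)
    _ = K * (N * N ^ (-(2 * α))) * phi a + 2 * T * (N ^ (-Hmin)) * phi a := by ring
    _ ≤ K * N ^ (-m) * phi a + 2 * T * N ^ (-m) * phi a := by
        apply add_le_add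
        · exact mul_le_mul_of_nonneg_right
            (mul_le_mul_of_nonneg_left f1 hKpos.le) hpa
        · exact mul_le_mul_of_nonneg_right
            (mul_le_mul_of_nonneg_left f2 (by linarith)) hpa
    _ = (K + 2 * T) * phi a * N ^ (-m) := by ring
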